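/- arXiv:2402.12269 — 3 statements merged into one kernel-verified Lean document; each statement's English description precedes it below -/
import Mathlib

section
/- The PMFGW discrepancy is invariant under graph isomorphism: if ŷ' is obtained from ŷ by a node permutation P and g' is obtained from g by a node permutation Q (so that their paddings satisfy P(g') = permuted P(g)), then PMFGW(ŷ, P(g)) = PMFGW(ŷ', P(g')). -/
/-- Doubly stochastic M×M matrices. -/
def DS (M : ℕ) : Set (Matrix (Fin M) (Fin M) ℝ) :=
  {T | (∀ i j, 0 ≤ T i j) ∧ (∀ i, ∑ j, T i j = 1) ∧ (∀ j, ∑ i, T i j = 1)}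

/-- The PMFGW objective for a transport plan `T`, prediction `(hh, FF, AA)` and
(padded) target `(h, F, A)`. -/
def pmfgwObj {M d : ℕ} (ℓh : ℝ → ℝ → ℝ) (ℓF : (Fin d → ℝ) → (Fin d → ℝ) → ℝ)
    (ℓA : ℝ → ℝ → ℝ)
    (hh : Fin M → ℝ) (FF : Fin M → Fin d → ℝ) (AA : Matrix (Fin M) (Fin M) ℝ)
    (h : Fin M → ℝ) (F : Fin M → Fin d → ℝ) (A : Matrix (Fin M) (Fin M) ℝ)
    (T : Matrix (Fin M) (Fin M) ℝ) : ℝ :=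
  (∑ i, ∑ j, T i j * ℓh (hh i) (h j))
  + (∑ i, ∑ j, T i j * ℓF (FF i) (F j) * h j)
  + (∑ i, ∑ j, ∑ k, ∑ l, T i j * T k l * ℓA (AA i k) (A j l) * h j * h l)

/-- PMFGW: minimum of the objective over doubly stochastic matrices. -/
noncomputable def PMFGW {M d : ℕ} (ℓh : ℝ → ℝ → ℝ) (ℓF : (Fin d → ℝ) → (Fin d → ℝ) → ℝ)
    (ℓA : ℝ → ℝ → ℝ)
    (hh : Fin M → ℝ) (FF : Fin M → Fin d → ℝ) (AA : Matrix (Fin M) (Fin M) ℝ)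
    (h : Fin M → ℝ) (F : Fin M → Fin d → ℝ) (A : Matrix (Fin M) (Fin M) ℝ) : ℝ :=
  sInf ((pmfgwObj ℓh ℓF ℓA hh FF AA h F A) '' DS M)

lemma ds_perm {M : ℕ} (σ τ : Equiv.Perm (Fin M)) {T : Matrix (Fin M) (Fin M) ℝ}
    (hT : T ∈ DS M) : (fun i j => T (σ i) (τ j)) ∈ DS M := by
  obtain ⟨h0, hr, hc⟩ := hT
  refine ⟨fun i j => h0 _ _, fun i => ?_, fun j => ?_⟩
  · rw [Fintype.sum_equiv τ _ (fun j => T (σ i) j) (fun j => rfl)]; exact hr _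
  · rw [Fintype.sum_equiv σ _ (fun i => T i (τ j)) (fun i => rfl)]; exact hc _

lemma obj_perm {M d : ℕ} (ℓh : ℝ → ℝ → ℝ) (ℓF : (Fin d → ℝ) → (Fin d → ℝ) → ℝ)
    (ℓA : ℝ → ℝ → ℝ)
    (hh : Fin M → ℝ) (FF : Fin M → Fin d → ℝ) (AA : Matrix (Fin M) (Fin M) ℝ)
    (h : Fin M → ℝ) (F : Fin M → Fin d → ℝ) (A : Matrix (Fin M) (Fin M) ℝ)
    (σ τ : Equiv.Perm (Fin M)) (T : Matrix (Fin M) (Fin M) ℝ) :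
    pmfgwObj ℓh ℓF ℓA (fun i => hh (σ i)) (fun i => FF (σ i)) (fun i k => AA (σ i) (σ k))
      (fun j => h (τ j)) (fun j => F (τ j)) (fun j l => A (τ j) (τ l)) T
    = pmfgwObj ℓh ℓF ℓA hh FF AA h F A (fun i j => T (σ.symm i) (τ.symm j)) := by
  unfold pmfgwObj
  refine congrArg₂ (· + ·) (congrArg₂ (· + ·) ?_ ?_) ?_
  · refine Fintype.sum_equiv σ _ _ (fun i => ?_)
    refine Fintype.sum_equiv τ _ _ (fun j => ?_)
    simp
  · refine Fintype.sum_equiv σ _ _ (fun i => ?_)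
    refine Fintype.sum_equiv τ _ _ (fun j => ?_)
    simp
  · refine Fintype.sum_equiv σ _ _ (fun i => ?_)
    refine Fintype.sum_equiv τ _ _ (fun j => ?_)
    refine Fintype.sum_equiv σ _ _ (fun k => ?_)
    refine Fintype.sum_equiv τ _ _ (fun l => ?_)
    simp

/-- PMFGW is invariant under graph isomorphism: permuting the nodes of the prediction by `σ`
and the nodes of the (padded) target by `τ` leaves the value unchanged. -/
theorem pmfgw_invariant {M d : ℕ} (ℓh : ℝ → ℝ → ℝ) (ℓF : (Fin d → ℝ) → (Fin d → ℝ) → ℝ)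
    (ℓA : ℝ → ℝ → ℝ)
    (hh : Fin M → ℝ) (FF : Fin M → Fin d → ℝ) (AA : Matrix (Fin M) (Fin M) ℝ)
    (h : Fin M → ℝ) (F : Fin M → Fin d → ℝ) (A : Matrix (Fin M) (Fin M) ℝ)
    (σ τ : Equiv.Perm (Fin M)) :
    PMFGW ℓh ℓF ℓA (fun i => hh (σ i)) (fun i => FF (σ i)) (fun i k => AA (σ i) (σ k))
      (fun j => h (τ j)) (fun j => F (τ j)) (fun j l => A (τ j) (τ l))
    = PMFGW ℓh ℓF ℓA hh FF AA h F A := by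
  unfold PMFGW
  congr 1
  apply Set.eq_of_subset_of_subset
  · rintro x ⟨T, hT, rfl⟩
    exact ⟨fun i j => T (σ.symm i) (τ.symm j), ds_perm σ.symm τ.symm hT,
      (obj_perm ℓh ℓF ℓA hh FF AA h F A σ τ T).symm⟩
  · rintro x ⟨T, hT, rfl⟩
    refine ⟨fun i j => T (σ i) (τ j), ds_perm σ τ hT, ?_⟩
    refine (obj_perm ℓh ℓF ℓA hh FF AA h F A σ τ _).trans ?_
    simp
end

section
/- PMFGW is nonnegative, and PMFGW(ŷ, P(g)) = 0 if and only if ŷ is isomorphic (via a node permutation) to the padded graph P(g). -/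
/-- `DS M` is compact. -/
lemma ds_compact (M : ℕ) : IsCompact (DS M) := by
  have hev : ∀ i j, Continuous fun T : Matrix (Fin M) (Fin M) ℝ => T i j :=
    fun i j => (continuous_apply j).comp (continuous_apply i)
  have hcomp0 : IsCompact ((Set.univ.pi fun _ : Fin M => Set.univ.pi fun _ : Fin M =>
      Set.Icc (0:ℝ) 1) : Set (Matrix (Fin M) (Fin M) ℝ)) :=
    isCompact_univ_pi fun _ => isCompact_univ_pi fun _ => isCompact_Icc
  apply hcomp0.of_isClosed_subset
  · have : DS M = (⋂ (i) (j), (fun T : Matrix (Fin M) (Fin M) ℝ => T i j) ⁻¹' Set.Ici 0) ∩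
        ((⋂ i, (fun T : Matrix (Fin M) (Fin M) ℝ => ∑ j, T i j) ⁻¹' {1}) ∩
         (⋂ j, (fun T : Matrix (Fin M) (Fin M) ℝ => ∑ i, T i j) ⁻¹' {1})) := by
      ext T; simp [DS]
    rw [this]
    exact ((isClosed_iInter fun i => isClosed_iInter fun j =>
        (isClosed_Ici).preimage (hev i j))).inter
      (((isClosed_iInter fun i => (isClosed_singleton).preimage
          (continuous_finset_sum _ fun j _ => hev i j))).inter
       ((isClosed_iInter fun j => (isClosed_singleton).preimage
          (continuous_finset_sum _ fun i _ => hev i j))))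
  · intro T hT
    simp only [Set.mem_pi, Set.mem_univ, forall_true_left]
    intro i j
    refine ⟨hT.1 i j, ?_⟩
    calc T i j ≤ ∑ k, T i k := Finset.single_le_sum (fun k _ => hT.1 i k) (Finset.mem_univ j)
    _ = 1 := hT.2.1 i

/-- Any doubly stochastic matrix has a positive entry pattern containing a permutation. -/
lemma exists_perm_pos {M : ℕ} {T : Matrix (Fin M) (Fin M) ℝ} (hT : T ∈ DS M) :
    ∃ σ : Equiv.Perm (Fin M), ∀ j, 0 < T (σ j) j := by
  have hT' : T ∈ doublyStochastic ℝ (Fin M) := by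
    rw [mem_doublyStochastic_iff_sum]; exact ⟨hT.1, hT.2.1, hT.2.2⟩
  obtain ⟨w, hw0, hw1, hw2⟩ := exists_eq_sum_perm_of_mem_doublyStochastic hT'
  have hex : ∃ σ₀, 0 < w σ₀ := by
    by_contra hc; push_neg at hc
    have : ∑ σ, w σ = 0 := Finset.sum_eq_zero fun σ _ => le_antisymm (hc σ) (hw0 σ)
    rw [this] at hw1; norm_num at hw1
  obtain ⟨σ₀, hσ₀⟩ := hex
  refine ⟨σ₀.symm, fun j => ?_⟩
  have hTval : T (σ₀.symm j) j = ∑ τ : Equiv.Perm (Fin M),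
      w τ * (if τ (σ₀.symm j) = j then 1 else 0) := by
    rw [← hw2]
    simp [Matrix.sum_apply, Equiv.Perm.permMatrix, PEquiv.toMatrix_apply,
      Equiv.toPEquiv_apply, eq_comm]
  rw [hTval]
  calc (0:ℝ) < w σ₀ * (if σ₀ (σ₀.symm j) = j then 1 else 0) := by simp [hσ₀]
  _ ≤ ∑ τ : Equiv.Perm (Fin M), w τ * (if τ (σ₀.symm j) = j then 1 else 0) :=
      Finset.single_le_sum (f := fun τ : Equiv.Perm (Fin M) =>
        w τ * (if τ (σ₀.symm j) = j then 1 else 0))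
        (fun τ _ => mul_nonneg (hw0 τ) (by split <;> norm_num)) (Finset.mem_univ σ₀)

/-- A double sum of nonnegative terms vanishing forces each term to vanish. -/
lemma sum2_zero {M : ℕ} {f : Fin M → Fin M → ℝ} (h0 : ∀ i j, 0 ≤ f i j)
    (hs : ∑ i, ∑ j, f i j = 0) (i j : Fin M) : f i j = 0 := by
  have h1 : ∀ i : Fin M, 0 ≤ ∑ j, f i j := fun i => Finset.sum_nonneg fun j _ => h0 i j
  have h2 : ∑ j, f i j = 0 :=
    (Finset.sum_eq_zero_iff_of_nonneg (fun i _ => h1 i)).1 hs i (Finset.mem_univ i)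
  exact (Finset.sum_eq_zero_iff_of_nonneg (fun j _ => h0 i j)).1 h2 j (Finset.mem_univ j)

/-- Summing against a permutation indicator. -/
lemma perm_sum {M : ℕ} (σ : Equiv.Perm (Fin M)) (c : Fin M → Fin M → ℝ) :
    ∑ i, ∑ j, (if i = σ j then (1:ℝ) else 0) * c i j = ∑ j, c (σ j) j := by
  rw [Finset.sum_comm]
  simp [ite_mul, Finset.sum_ite_eq']

/-- PMFGW with positive ground losses is nonnegative, and it vanishes iff the (continuous)
prediction is isomorphic, via a node permutation, to the padded target. -/
theorem pmfgw_nonneg_and_eq_zero_iff_isomorphic {M d m : ℕ} (hm : m ≤ M)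
    (ℓh : ℝ → ℝ → ℝ) (ℓF : (Fin d → ℝ) → (Fin d → ℝ) → ℝ) (ℓA : ℝ → ℝ → ℝ)
    (hℓh : ∀ x y, 0 ≤ ℓh x y ∧ (ℓh x y = 0 ↔ x = y))
    (hℓF : ∀ x y, 0 ≤ ℓF x y ∧ (ℓF x y = 0 ↔ x = y))
    (hℓA : ∀ x y, 0 ≤ ℓA x y ∧ (ℓA x y = 0 ↔ x = y))
    -- the prediction: a continuous graph
    (hh : Fin M → ℝ) (FF : Fin M → Fin d → ℝ) (AA : Matrix (Fin M) (Fin M) ℝ)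
    (hhh : ∀ i, hh i ∈ Set.Icc (0:ℝ) 1) (hAA : ∀ i k, AA i k ∈ Set.Icc (0:ℝ) 1)
    -- the padded target: mask is m ones followed by M−m zeros, features and adjacency zero-padded
    (h : Fin M → ℝ) (F : Fin M → Fin d → ℝ) (A : Matrix (Fin M) (Fin M) ℝ)
    (hpad : ∀ j, h j = if (j : ℕ) < m then 1 else 0)
    (hFpad : ∀ j : Fin M, ¬ ((j : ℕ) < m) → F j = 0)
    (hApad : ∀ j l : Fin M, (¬ ((j : ℕ) < m) ∨ ¬ ((l : ℕ) < m)) → A j l = 0) :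
    0 ≤ PMFGW ℓh ℓF ℓA hh FF AA h F A ∧
    (PMFGW ℓh ℓF ℓA hh FF AA h F A = 0 ↔
      ∃ σ : Equiv.Perm (Fin M),
        (∀ j, hh (σ j) = h j) ∧
        (∀ j, h j = 1 → FF (σ j) = F j) ∧
        (∀ j l, h j = 1 → h l = 1 → AA (σ j) (σ l) = A j l)) := by
  set f := pmfgwObj ℓh ℓF ℓA hh FF AA h F A with hf
  have hposh : ∀ j, (0:ℝ) ≤ h j := fun j => by rw [hpad j]; split <;> norm_num
  have h01 : ∀ j, h j = 0 ∨ h j = 1 := fun j => by rw [hpad j]; split <;> simp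
  -- each partial objective is nonnegative on DS
  have hS1 : ∀ T ∈ DS M, 0 ≤ ∑ i, ∑ j, T i j * ℓh (hh i) (h j) := fun T hT =>
    Finset.sum_nonneg fun i _ => Finset.sum_nonneg fun j _ =>
      mul_nonneg (hT.1 i j) (hℓh _ _).1
  have hS2 : ∀ T ∈ DS M, 0 ≤ ∑ i, ∑ j, T i j * ℓF (FF i) (F j) * h j := fun T hT =>
    Finset.sum_nonneg fun i _ => Finset.sum_nonneg fun j _ =>
      mul_nonneg (mul_nonneg (hT.1 i j) (hℓF _ _).1) (hposh j)
  have hterm3 : ∀ T ∈ DS M, ∀ i j k l : Fin M,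
      0 ≤ T i j * T k l * ℓA (AA i k) (A j l) * h j * h l := fun T hT i j k l =>
    mul_nonneg (mul_nonneg (mul_nonneg (mul_nonneg (hT.1 i j) (hT.1 k l))
      (hℓA _ _).1) (hposh j)) (hposh l)
  have hS3 : ∀ T ∈ DS M,
      0 ≤ ∑ i, ∑ j, ∑ k, ∑ l, T i j * T k l * ℓA (AA i k) (A j l) * h j * h l := fun T hT =>
    Finset.sum_nonneg fun i _ => Finset.sum_nonneg fun j _ =>
      Finset.sum_nonneg fun k _ => Finset.sum_nonneg fun l _ => hterm3 T hT i j k l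
  have hnonneg : ∀ T ∈ DS M, 0 ≤ f T := fun T hT =>
    add_nonneg (add_nonneg (hS1 T hT) (hS2 T hT)) (hS3 T hT)
  have hIdDS : (1 : Matrix (Fin M) (Fin M) ℝ) ∈ DS M := by
    have h1 := one_mem (doublyStochastic ℝ (Fin M))
    rw [mem_doublyStochastic_iff_sum] at h1
    exact ⟨h1.1, h1.2.1, h1.2.2⟩
  have hne : (DS M).Nonempty := ⟨1, hIdDS⟩
  have hlb : ∀ x ∈ f '' DS M, (0:ℝ) ≤ x := by rintro x ⟨T, hT, rfl⟩; exact hnonneg T hT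
  have hPM0 : 0 ≤ PMFGW ℓh ℓF ℓA hh FF AA h F A := le_csInf (hne.image f) hlb
  refine ⟨hPM0, ?_, ?_⟩
  · -- forward: PMFGW = 0 implies isomorphism
    intro hzero
    -- existence of a minimizer
    have hev : ∀ i j, Continuous fun T : Matrix (Fin M) (Fin M) ℝ => T i j :=
      fun i j => (continuous_apply j).comp (continuous_apply i)
    have hcont : Continuous f := by
      rw [hf]; unfold pmfgwObj
      exact ((continuous_finset_sum _ fun i _ => continuous_finset_sum _ fun j _ =>
          (hev i j).mul continuous_const).add
        (continuous_finset_sum _ fun i _ => continuous_finset_sum _ fun j _ =>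
          ((hev i j).mul continuous_const).mul continuous_const)).add
        (continuous_finset_sum _ fun i _ => continuous_finset_sum _ fun j _ =>
          continuous_finset_sum _ fun k _ => continuous_finset_sum _ fun l _ =>
          ((((hev i j).mul (hev k l)).mul continuous_const).mul continuous_const).mul
            continuous_const)
    obtain ⟨T, hT, hmin⟩ := (ds_compact M).exists_isMinOn hne hcont.continuousOn
    have hfT0 : f T = 0 := by
      have hle : f T ≤ PMFGW ℓh ℓF ℓA hh FF AA h F A :=
        le_csInf (hne.image f) (by rintro x ⟨S, hS, rfl⟩; exact hmin hS)
      rw [hzero] at hle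
      exact le_antisymm hle (hnonneg T hT)
    -- split into the three vanishing sums
    have e1 : ∑ i, ∑ j, T i j * ℓh (hh i) (h j) = 0 := by
      have := hS1 T hT; have := hS2 T hT; have := hS3 T hT
      have hsum : (∑ i, ∑ j, T i j * ℓh (hh i) (h j))
        + (∑ i, ∑ j, T i j * ℓF (FF i) (F j) * h j)
        + (∑ i, ∑ j, ∑ k, ∑ l, T i j * T k l * ℓA (AA i k) (A j l) * h j * h l) = 0 := hfT0
      linarith
    have e2 : ∑ i, ∑ j, T i j * ℓF (FF i) (F j) * h j = 0 := by
      have := hS1 T hT; have := hS2 T hT; have := hS3 T hT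
      have hsum : (∑ i, ∑ j, T i j * ℓh (hh i) (h j))
        + (∑ i, ∑ j, T i j * ℓF (FF i) (F j) * h j)
        + (∑ i, ∑ j, ∑ k, ∑ l, T i j * T k l * ℓA (AA i k) (A j l) * h j * h l) = 0 := hfT0
      linarith
    have e3 : ∑ i, ∑ j, ∑ k, ∑ l, T i j * T k l * ℓA (AA i k) (A j l) * h j * h l = 0 := by
      have := hS1 T hT; have := hS2 T hT; have := hS3 T hT
      have hsum : (∑ i, ∑ j, T i j * ℓh (hh i) (h j))
        + (∑ i, ∑ j, T i j * ℓF (FF i) (F j) * h j)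
        + (∑ i, ∑ j, ∑ k, ∑ l, T i j * T k l * ℓA (AA i k) (A j l) * h j * h l) = 0 := hfT0
      linarith
    -- termwise vanishing
    have t1 : ∀ i j, T i j * ℓh (hh i) (h j) = 0 :=
      sum2_zero (fun i j => mul_nonneg (hT.1 i j) (hℓh _ _).1) e1
    have t2 : ∀ i j, T i j * ℓF (FF i) (F j) * h j = 0 :=
      sum2_zero (fun i j => mul_nonneg (mul_nonneg (hT.1 i j) (hℓF _ _).1) (hposh j)) e2
    have t3 : ∀ i j k l, T i j * T k l * ℓA (AA i k) (A j l) * h j * h l = 0 := by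
      have outer : ∀ i j, (∑ k, ∑ l, T i j * T k l * ℓA (AA i k) (A j l) * h j * h l) = 0 :=
        sum2_zero (fun i j => Finset.sum_nonneg fun k _ => Finset.sum_nonneg fun l _ =>
          hterm3 T hT i j k l) e3
      intro i j k l
      exact sum2_zero (f := fun k l => T i j * T k l * ℓA (AA i k) (A j l) * h j * h l)
        (fun k l => hterm3 T hT i j k l) (outer i j) k l
    obtain ⟨σ, hσ⟩ := exists_perm_pos hT
    refine ⟨σ, fun j => ?_, fun j hj => ?_, fun j l hj hl => ?_⟩
    · have := t1 (σ j) j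
      rcases mul_eq_zero.1 this with hc | hc
      · exact absurd hc (ne_of_gt (hσ j))
      · exact (hℓh _ _).2.1 hc
    · have := t2 (σ j) j
      rw [hj, mul_one] at this
      rcases mul_eq_zero.1 this with hc | hc
      · exact absurd hc (ne_of_gt (hσ j))
      · exact (hℓF _ _).2.1 hc
    · have := t3 (σ j) j (σ l) l
      rw [hj, hl, mul_one, mul_one] at this
      rcases mul_eq_zero.1 this with hc | hc
      · rcases mul_eq_zero.1 hc with hc' | hc'
        · exact absurd hc' (ne_of_gt (hσ j))
        · exact absurd hc' (ne_of_gt (hσ l))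
      · exact (hℓA _ _).2.1 hc
  · -- backward: isomorphism implies PMFGW = 0
    rintro ⟨σ, hσh, hσF, hσA⟩
    set T : Matrix (Fin M) (Fin M) ℝ := Matrix.of fun i j => if i = σ j then 1 else 0 with hTdef
    have hTapp : ∀ i j, T i j = if i = σ j then 1 else 0 := fun i j => rfl
    have hTDS : T ∈ DS M := by
      refine ⟨fun i j => ?_, fun i => ?_, fun j => ?_⟩
      · rw [hTapp]; split <;> norm_num
      · simp only [hTapp, ← Equiv.symm_apply_eq]
        simp [Finset.sum_ite_eq]
      · simp only [hTapp]
        simp [Finset.sum_ite_eq']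
    have hval : f T = 0 := by
      have v1 : ∑ i, ∑ j, T i j * ℓh (hh i) (h j) = 0 := by
        simp only [hTapp]
        rw [perm_sum σ (fun i j => ℓh (hh i) (h j))]
        exact Finset.sum_eq_zero fun j _ => (hℓh _ _).2.2 (hσh j)
      have v2 : ∑ i, ∑ j, T i j * ℓF (FF i) (F j) * h j = 0 := by
        have : ∀ i j : Fin M, T i j * ℓF (FF i) (F j) * h j
            = (if i = σ j then (1:ℝ) else 0) * (ℓF (FF i) (F j) * h j) := by
          intro i j; rw [hTapp]; ring
        simp only [this]
        rw [perm_sum σ (fun i j => ℓF (FF i) (F j) * h j)]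
        refine Finset.sum_eq_zero fun j _ => ?_
        rcases h01 j with hj | hj
        · rw [hj, mul_zero]
        · rw [(hℓF _ _).2.2 (hσF j hj), zero_mul]
      have v3 : ∑ i, ∑ j, ∑ k, ∑ l, T i j * T k l * ℓA (AA i k) (A j l) * h j * h l = 0 := by
        have step : ∑ i, ∑ j, ∑ k, ∑ l, T i j * T k l * ℓA (AA i k) (A j l) * h j * h l
            = ∑ i, ∑ j, (if i = σ j then (1:ℝ) else 0) *
                (∑ k, ∑ l, (if k = σ l then (1:ℝ) else 0) *
                  (ℓA (AA i k) (A j l) * h j * h l)) := by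
          refine Finset.sum_congr rfl fun i _ => Finset.sum_congr rfl fun j _ => ?_
          rw [Finset.mul_sum]
          refine Finset.sum_congr rfl fun k _ => ?_
          rw [Finset.mul_sum]
          refine Finset.sum_congr rfl fun l _ => ?_
          rw [hTapp, hTapp]; ring
        rw [step, perm_sum σ (fun i j => ∑ k, ∑ l, (if k = σ l then (1:ℝ) else 0) *
          (ℓA (AA i k) (A j l) * h j * h l))]
        refine Finset.sum_eq_zero fun j _ => ?_
        rw [perm_sum σ (fun k l => ℓA (AA (σ j) k) (A j l) * h j * h l)]
        refine Finset.sum_eq_zero fun l _ => ?_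
        rcases h01 j with hj | hj
        · rw [hj]; ring
        rcases h01 l with hl | hl
        · rw [hl]; ring
        · rw [(hℓA _ _).2.2 (hσA j l hj hl)]; ring
      rw [hf]; unfold pmfgwObj
      rw [v1, v2, v3]; ring
    have hle : PMFGW ℓh ℓF ℓA hh FF AA h F A ≤ 0 := by
      have : f T ∈ f '' DS M := ⟨T, hTDS, rfl⟩
      rw [hval] at this
      exact csInf_le ⟨0, hlb⟩ this
    exact le_antisymm hle hPM0
end

section
/- The padded Fused Gromov-Wasserstein value equals the partial Fused Gromov-Wasserstein value: min over doubly stochastic M×M matrices T of Σ_{i=1}^M Σ_{j=1}^m T_{ij} c_{ij} + Σ_{i,k=1}^M Σ_{j,l=1}^m T_{ij} T_{kl} d_{ik,jl} equals min over partial plans T_p ∈ π_{M,m} of the same objective, and the first m columns of any optimal doubly stochastic plan form an optimal partial plan. -/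
/-- Partial transport plans `π_{M,m}`. -/
def partialPlans (M m : ℕ) : Set (Matrix (Fin M) (Fin m) ℝ) :=
  {T | (∀ i j, T i j ∈ Set.Icc (0 : ℝ) 1) ∧ (∀ i, ∑ j, T i j ≤ 1) ∧
       (∀ j, ∑ i, T i j = 1) ∧ (∑ i, ∑ j, T i j = (m : ℝ))}

/-- The (fused) objective on an `M×m` plan, with linear cost `c` and quadratic cost `d`. -/
def fgwObj {M m : ℕ} (c : Matrix (Fin M) (Fin m) ℝ)
    (d : Fin M → Fin M → Fin m → Fin m → ℝ) (T : Matrix (Fin M) (Fin m) ℝ) : ℝ :=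
  (∑ i, ∑ j, T i j * c i j) + (∑ i, ∑ k, ∑ j, ∑ l, T i j * T k l * d i k j l)

/-- The first `m` columns of a square `M×M` matrix. -/
def restrict {M m : ℕ} (hm : m ≤ M) (T : Matrix (Fin M) (Fin M) ℝ) :
    Matrix (Fin M) (Fin m) ℝ :=
  Matrix.of fun i j => T i (Fin.castLE hm j)

lemma restrict_mem_partialPlans {M m : ℕ} (hm : m ≤ M) {T : Matrix (Fin M) (Fin M) ℝ}
    (hT : T ∈ DS M) : restrict hm T ∈ partialPlans M m := by
  obtain ⟨hpos, hrow, hcol⟩ := hT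
  have hsub : ∀ i : Fin M, ∑ j : Fin m, T i (Fin.castLE hm j) ≤ 1 := by
    intro i
    rw [← hrow i]
    have : ∑ j : Fin m, T i (Fin.castLE hm j)
        = ∑ j ∈ Finset.univ.map (Fin.castLEEmb hm), T i j := by
      rw [Finset.sum_map]; rfl
    rw [this]
    exact Finset.sum_le_sum_of_subset_of_nonneg (Finset.subset_univ _)
      (fun j _ _ => hpos i j)
  refine ⟨fun i j => ⟨hpos i _, ?_⟩, hsub, fun j => hcol _, ?_⟩
  · calc T i (Fin.castLE hm j) ≤ ∑ j', T i j' :=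
          Finset.single_le_sum (fun j' _ => hpos i j') (Finset.mem_univ _)
      _ = 1 := hrow i
  · change ∑ i, ∑ j, T i (Fin.castLE hm j) = _
    rw [Finset.sum_comm]
    rw [Finset.sum_congr rfl (fun j _ => hcol (Fin.castLE hm j))]
    simp

lemma exists_DS_restrict {M m : ℕ} (hm : m ≤ M) {Tp : Matrix (Fin M) (Fin m) ℝ}
    (hTp : Tp ∈ partialPlans M m) : ∃ T ∈ DS M, restrict hm T = Tp := by
  obtain ⟨hIcc, hrow, hcol, htot⟩ := hTp
  set r : Fin M → ℝ := fun i => ∑ j, Tp i j with hr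
  set e : Fin M → ℝ := fun i => (1 - r i) / ((M : ℝ) - m) with he
  set T : Matrix (Fin M) (Fin M) ℝ :=
    Matrix.of (fun i j => if h : (j : ℕ) < m then Tp i ⟨j, h⟩ else e i) with hTdef
  -- total slack
  have hslack : ∑ i, (1 - r i) = (M : ℝ) - m := by
    rw [Finset.sum_sub_distrib]
    simp [htot]
  have hrnn : ∀ i, 0 ≤ 1 - r i := fun i => by linarith [hrow i]
  -- row sums of T
  have hrowT : ∀ i, ∑ j, T i j = r i + ((M : ℝ) - m) * e i := by
    intro i
    have key : ∑ j : Fin M, T i j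
        = ∑ j ∈ Finset.range M,
            (fun n => if h : n < m then Tp i ⟨n, h⟩ else e i) j := by
      simp only [hTdef, Matrix.of_apply]
      exact Fin.sum_univ_eq_sum_range (fun n => if h : n < m then Tp i ⟨n, h⟩ else e i) M
    rw [key, Finset.range_eq_Ico,
      ← Finset.sum_Ico_consecutive _ (Nat.zero_le m) hm]
    have h1 : ∑ j ∈ Finset.Ico 0 m,
        (fun n => if h : n < m then Tp i ⟨n, h⟩ else e i) j = r i := by
      have h0 := Fin.sum_univ_eq_sum_range
        (fun n => if h : n < m then Tp i ⟨n, h⟩ else e i) m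
      rw [← Finset.range_eq_Ico, ← h0]
      simp [hr]
    have h2 : ∑ j ∈ Finset.Ico m M,
        (fun n => if h : n < m then Tp i ⟨n, h⟩ else e i) j = ((M : ℝ) - m) * e i := by
      have hconst : ∀ j ∈ Finset.Ico m M,
          (fun n => if h : n < m then Tp i ⟨n, h⟩ else e i) j = e i := by
        intro j hj
        obtain ⟨h1, _⟩ := Finset.mem_Ico.mp hj
        simp only [dif_neg (not_lt.mpr h1)]
      rw [Finset.sum_congr rfl hconst, Finset.sum_const, Nat.card_Ico,
        nsmul_eq_mul, Nat.cast_sub hm]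
    rw [h1, h2]
  have hTDS : T ∈ DS M := by
    refine ⟨fun i j => ?_, fun i => ?_, fun j => ?_⟩
    · simp only [hTdef, Matrix.of_apply]
      split
      · exact (hIcc i _).1
      · exact div_nonneg (hrnn i) (sub_nonneg.mpr (Nat.cast_le.mpr hm))
    · rw [hrowT i]
      rcases eq_or_lt_of_le hm with hEq | hLt
      · have hz : (M : ℝ) - m = 0 := by rw [hEq]; ring
        have : ∀ i ∈ Finset.univ, (1 : ℝ) - r i = 0 := by
          have := (Finset.sum_eq_zero_iff_of_nonneg
            (fun i _ => hrnn i)).mp (by rw [hslack, hz])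
          exact this
        have hri : r i = 1 := by have := this i (Finset.mem_univ i); linarith
        rw [hz, hri]; ring
      · have hz : (M : ℝ) - m ≠ 0 := by
          have : (m : ℝ) < M := by exact_mod_cast hLt
          linarith
        simp only [he]
        field_simp
        ring
    · rcases lt_or_ge (j : ℕ) m with h | h
      · have : ∑ i, T i j = ∑ i, Tp i ⟨j, h⟩ := by
          apply Finset.sum_congr rfl
          intro i _
          simp only [hTdef, Matrix.of_apply, dif_pos h]
        rw [this, hcol]
      · have hmM : m < M := lt_of_le_of_lt h j.2
        have hz : (M : ℝ) - m ≠ 0 := by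
          have : (m : ℝ) < M := by exact_mod_cast hmM
          linarith
        have : ∑ i, T i j = ∑ i, e i := by
          apply Finset.sum_congr rfl
          intro i _
          simp only [hTdef, Matrix.of_apply, dif_neg (by omega : ¬ (j : ℕ) < m)]
        rw [this]
        simp only [he]
        rw [← Finset.sum_div, hslack, div_self hz]
  refine ⟨T, hTDS, ?_⟩
  ext i j
  simp only [restrict, Matrix.of_apply, hTdef]
  rw [dif_pos (by exact j.2 : ((Fin.castLE hm j : Fin M) : ℕ) < m)]
  exact congrArg (Tp i) (by ext; rfl)

lemma restrict_image_eq {M m : ℕ} (hm : m ≤ M) :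
    restrict hm '' DS M = partialPlans M m := by
  ext Tp
  constructor
  · rintro ⟨T, hT, rfl⟩
    exact restrict_mem_partialPlans hm hT
  · intro h
    obtain ⟨T, hT, hTr⟩ := exists_DS_restrict hm h
    exact ⟨T, hT, hTr⟩

/-- The padded Fused Gromov-Wasserstein value (minimum over doubly stochastic plans of the
objective, which only involves the first `m` columns) equals the partial Fused
Gromov-Wasserstein value (minimum over partial plans), and the first `m` columns of any
optimal doubly stochastic plan form an optimal partial plan. -/
theorem padded_eq_partial_fgw {M m : ℕ} (hm : m ≤ M)
    (c : Matrix (Fin M) (Fin m) ℝ) (d : Fin M → Fin M → Fin m → Fin m → ℝ)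
    (hd : ∀ i k j l, 0 ≤ d i k j l) :
    sInf ((fun T => fgwObj c d (restrict hm T)) '' DS M)
      = sInf (fgwObj c d '' partialPlans M m) ∧
    ∀ T ∈ DS M, fgwObj c d (restrict hm T) = sInf ((fun T => fgwObj c d (restrict hm T)) '' DS M) →
      restrict hm T ∈ partialPlans M m ∧
      fgwObj c d (restrict hm T) = sInf (fgwObj c d '' partialPlans M m) := by
  have himg : (fun T => fgwObj c d (restrict hm T)) '' DS M
      = fgwObj c d '' partialPlans M m := by
    rw [← restrict_image_eq hm, ← Set.image_image]
  refine ⟨by rw [himg], fun T hT hopt => ⟨restrict_mem_partialPlans hm hT, ?_⟩⟩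
  rw [hopt, himg]
end
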